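/- Let M be a finite monoid and w ∈ M* a word, with positions j < k and suppose w[j+1,k−1] evaluates to an element of an H-class H inside a J-class J. Suppose w[j+1,i] is the longest prefix starting at j+1 whose evaluation is ≥_J J, let yz denote its value where y = w[j+1,k−1] and z = w[k,i]. Then the map m_z restricted to H is a bijection onto the H-class of yz, and y = m_z⁻¹(yz). -/

import Mathlib

def RLe {M : Type*} [Monoid M] (x y : M) : Prop := ∃ a : M, x = y * a

def LLe {M : Type*} [Monoid M] (x y : M) : Prop := ∃ a : M, x = a * y

def GreenH {M : Type*} [Monoid M] (x y : M) : Prop :=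
  (RLe x y ∧ RLe y x) ∧ (LLe x y ∧ LLe y x)

def JLe {M : Type*} [Monoid M] (x y : M) : Prop := ∃ a b : M, x = a * y * b

/-- The product `w_a ⋯ w_b` of the letters of `w` from position `a` to position `b`. -/
def wprod {M : Type*} [Monoid M] (w : ℕ → M) (a b : ℕ) : M :=
  ((List.range' a (b + 1 - a)).map w).prod

/-- In a finite monoid every element has an idempotent positive power. -/
lemma exists_idem_pow {M : Type*} [Monoid M] [Finite M] (x : M) :
    ∃ n, 0 < n ∧ x ^ n * x ^ n = x ^ n := by
  obtain ⟨m, n, hmn, h⟩ := Finite.exists_ne_map_eq_of_infinite (fun n : ℕ => x ^ n)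
  have h' : x ^ m = x ^ n := h
  clear h
  wlog hlt : m < n generalizing m n
  · exact this n m (Ne.symm hmn) h'.symm (by omega)
  set d := n - m with hd
  have hdpos : 0 < d := by omega
  have hn : n = m + d := by omega
  have step : ∀ s, m ≤ s → x ^ (s + d) = x ^ s := by
    intro s hs
    obtain ⟨r, rfl⟩ := Nat.exists_eq_add_of_le hs
    calc x ^ (m + r + d) = x ^ (m + d) * x ^ r := by rw [← pow_add]; congr 1; omega
      _ = x ^ m * x ^ r := by rw [← hn, ← h']
      _ = x ^ (m + r) := by rw [pow_add]
  have steps : ∀ t s, m ≤ s → x ^ (s + t * d) = x ^ s := by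
    intro t
    induction t with
    | zero => intro s _; simp
    | succ t ih =>
      intro s hs
      have he : s + (t + 1) * d = (s + t * d) + d := by ring
      rw [he, step _ (by omega), ih s hs]
  refine ⟨d * (m + 1), by positivity, ?_⟩
  have he : x ^ (d * (m + 1)) * x ^ (d * (m + 1)) = x ^ (d * (m + 1) + (m + 1) * d) := by
    rw [pow_add]; ring_nf
  have hm : m + 1 ≤ d * (m + 1) := Nat.le_mul_of_pos_left _ hdpos
  rw [he, steps (m + 1) (d * (m + 1)) (by omega)]

/-- If y = w[j+1,k−1] lies in the H-class H inside the J-class J, and w[j+1,i] is the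
    longest prefix starting at j+1 whose evaluation is ≥_J J, with z = w[k,i], then
    right multiplication by z is a bijection from H onto the H-class of yz, and y is
    the unique preimage of yz in H. -/
theorem infix_H_class_recovery {M : Type*} [Monoid M] [Finite M]
    (w : ℕ → M) (j k i : ℕ) (hjk : j < k) (hki : k ≤ i + 1)
    (hmax : JLe (wprod w (j + 1) (k - 1)) (wprod w (j + 1) i))
    (hmax' : ¬ JLe (wprod w (j + 1) (k - 1)) (wprod w (j + 1) (i + 1))) :
    Set.BijOn (fun u => u * wprod w k i)
        {u : M | GreenH u (wprod w (j + 1) (k - 1))}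
        {u : M | GreenH u (wprod w (j + 1) (k - 1) * wprod w k i)} ∧
    (∀ u : M, GreenH u (wprod w (j + 1) (k - 1)) →
      u * wprod w k i = wprod w (j + 1) (k - 1) * wprod w k i →
      u = wprod w (j + 1) (k - 1)) := by
  set y := wprod w (j + 1) (k - 1) with hy
  set z := wprod w k i with hz
  -- split of the product
  have hsplit : wprod w (j + 1) i = y * z := by
    rw [hy, hz]
    unfold wprod
    rw [← List.prod_append, ← List.map_append]
    congr 1
    have h1 : k - 1 + 1 - (j + 1) = k - (j + 1) := by omega
    have h3 : (j + 1) + (k - (j + 1)) = k := by omega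
    have h2 : i + 1 - (j + 1) = (i + 1 - k) + (k - (j + 1)) := by omega
    have happ := List.range'_append_1 (s := j + 1) (m := k - (j + 1)) (n := i + 1 - k)
    rw [Nat.add_comm (k - (j + 1))] at happ
    rw [h3] at happ
    rw [h1, h2, ← happ]
  -- stability: get a with y = y * z * a
  obtain ⟨p, q, hpq⟩ := hmax
  rw [hsplit] at hpq
  have key : ∀ n : ℕ, y = p ^ n * y * (z * q) ^ n := by
    intro n
    induction n with
    | zero => simp
    | succ n ih =>
      calc y = p * y * (z * q) := by rw [← mul_assoc] at hpq ⊢; exact hpq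
        _ = p * (p ^ n * y * (z * q) ^ n) * (z * q) := by rw [← ih]
        _ = p ^ (n + 1) * y * (z * q) ^ (n + 1) := by
            rw [pow_succ' p n, pow_succ (z * q) n]; simp only [mul_assoc]
  obtain ⟨n, hn, hidem⟩ := exists_idem_pow (z * q)
  have hyf : y * (z * q) ^ n = y := by
    have h1 := key n
    calc y * (z * q) ^ n = (p ^ n * y * (z * q) ^ n) * (z * q) ^ n := by rw [← h1]
      _ = p ^ n * y * ((z * q) ^ n * (z * q) ^ n) := by simp only [mul_assoc]
      _ = p ^ n * y * (z * q) ^ n := by rw [hidem]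
      _ = y := h1.symm
  -- the inverse element a : y = y * z * a
  obtain ⟨n', rfl⟩ : ∃ n', n = n' + 1 := ⟨n - 1, by omega⟩
  set a := q * (z * q) ^ n' with ha
  have hya : y * z * a = y := by
    calc y * z * a = y * ((z * q) * (z * q) ^ n') := by rw [ha]; simp only [mul_assoc]
      _ = y * (z * q) ^ (n' + 1) := by rw [pow_succ']
      _ = y := hyf
  -- key cancellation: anything left-divisible by y is fixed by (· * z * a)
  have hfix : ∀ c : M, (c * y) * z * a = c * y := by
    intro c
    calc (c * y) * z * a = c * (y * z * a) := by simp only [mul_assoc]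
      _ = c * y := by rw [hya]
  constructor
  · refine ⟨?_, ?_, ?_⟩
    · -- MapsTo
      rintro u ⟨⟨⟨a₁, ha₁⟩, ⟨a₂, ha₂⟩⟩, ⟨b₁, hb₁⟩, ⟨b₂, hb₂⟩⟩
      have hu : u * z * a = u := by rw [hb₁]; exact hfix b₁
      refine ⟨⟨⟨a * a₁ * z, ?_⟩, ⟨a * a₂ * z, ?_⟩⟩, ⟨b₁, by rw [hb₁]; simp only [mul_assoc]⟩,
        ⟨b₂, by rw [hb₂]; simp only [mul_assoc]⟩⟩
      · calc u * z = (y * z * a) * a₁ * z := by rw [hya, ← ha₁]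
          _ = y * z * (a * a₁ * z) := by simp only [mul_assoc]
      · calc y * z = (u * z * a) * a₂ * z := by rw [hu, ← ha₂]
          _ = u * z * (a * a₂ * z) := by simp only [mul_assoc]
    · -- InjOn
      rintro u₁ ⟨⟨_, _⟩, ⟨c₁, hc₁⟩, _⟩ u₂ ⟨⟨_, _⟩, ⟨c₂, hc₂⟩, _⟩ heq
      simp only at heq
      calc u₁ = u₁ * z * a := by rw [hc₁]; exact (hfix c₁).symm
        _ = u₂ * z * a := by rw [heq]
        _ = u₂ := by rw [hc₂]; exact hfix c₂
    · -- SurjOn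
      rintro v ⟨⟨⟨c₁, hc₁⟩, ⟨c₂, hc₂⟩⟩, ⟨d₁, hd₁⟩, ⟨d₂, hd₂⟩⟩
      have hvz : v * a * z = v := by
        calc v * a * z = d₁ * (y * z * a) * z := by rw [hd₁]; simp only [mul_assoc]
          _ = d₁ * (y * z) := by rw [hya]; simp only [mul_assoc]
          _ = v := hd₁.symm
      refine ⟨v * a, ⟨⟨⟨z * c₁ * a, ?_⟩, ⟨z * c₂ * a, ?_⟩⟩, ⟨d₁, ?_⟩, ⟨d₂, ?_⟩⟩, hvz⟩
      · calc v * a = y * z * c₁ * a := by rw [← hc₁]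
          _ = y * (z * c₁ * a) := by simp only [mul_assoc]
      · calc y = y * z * a := hya.symm
          _ = v * c₂ * a := by rw [hc₂]
          _ = (v * a * z) * c₂ * a := by rw [hvz]
          _ = (v * a) * (z * c₂ * a) := by simp only [mul_assoc]
      · calc v * a = d₁ * (y * z) * a := by rw [← hd₁]
          _ = d₁ * (y * z * a) := by simp only [mul_assoc]
          _ = d₁ * y := by rw [hya]
      · calc y = y * z * a := hya.symm
          _ = d₂ * v * a := by rw [hd₂]
          _ = d₂ * (v * a) := by simp only [mul_assoc]
  · -- uniqueness
    rintro u ⟨_, ⟨c, hc⟩, _⟩ heq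
    calc u = u * z * a := by rw [hc]; exact (hfix c).symm
      _ = y * z * a := by rw [heq]
      _ = y := hya
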